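/- Let q ∈ K. For all plane posets P, Q, the coproduct Δ_q and the composition product satisfy the infinitesimal compatibility Δ_q(PQ) = (P ⊗ 1)Δ_q(Q) + Δ_q(P)(1 ⊗ Q) − P ⊗ Q in h_PP ⊗ h_PP. In particular, (h_PP, m, Δ_q) is an infinitesimal Hopf algebra. -/

import Mathlib

open scoped TensorProduct
open scoped Classical

noncomputable section

/-- A plane poset structure on a set `α`: two partial orders `≤_h` (`hle`) and `≤_r` (`rle`)
such that two distinct elements are comparable for `≤_h` if and only if they are not
comparable for `≤_r`. -/
structure PlanePoset (α : Type) where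
  hle : α → α → Prop
  rle : α → α → Prop
  hle_refl : ∀ x, hle x x
  hle_antisymm : ∀ x y, hle x y → hle y x → x = y
  hle_trans : ∀ x y z, hle x y → hle y z → hle x z
  rle_refl : ∀ x, rle x x
  rle_antisymm : ∀ x y, rle x y → rle y x → x = y
  rle_trans : ∀ x y z, rle x y → rle y z → rle x z
  compat : ∀ x y, x ≠ y → ((hle x y ∨ hle y x) ↔ ¬ (rle x y ∨ rle y x))

namespace PlanePoset

variable {α β : Type}

/-- The induced (total) order `x ≤ y iff x ≤_h y or x ≤_r y`. -/
def tle (P : PlanePoset α) (x y : α) : Prop := P.hle x y ∨ P.rle x y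

/-- Transport of a plane poset structure along a bijection. -/
def map (e : α ≃ β) (P : PlanePoset α) : PlanePoset β where
  hle x y := P.hle (e.symm x) (e.symm y)
  rle x y := P.rle (e.symm x) (e.symm y)
  hle_refl x := P.hle_refl _
  hle_antisymm x y h1 h2 := e.symm.injective (P.hle_antisymm _ _ h1 h2)
  hle_trans x y z h1 h2 := P.hle_trans _ _ _ h1 h2
  rle_refl x := P.rle_refl _
  rle_antisymm x y h1 h2 := e.symm.injective (P.rle_antisymm _ _ h1 h2)
  rle_trans x y z h1 h2 := P.rle_trans _ _ _ h1 h2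
  compat x y hxy := P.compat _ _ fun h => hxy (e.symm.injective h)

@[simp] theorem map_hle (e : α ≃ β) (P : PlanePoset α) (x y : β) :
    (P.map e).hle x y ↔ P.hle (e.symm x) (e.symm y) := Iff.rfl

@[simp] theorem map_rle (e : α ≃ β) (P : PlanePoset α) (x y : β) :
    (P.map e).rle x y ↔ P.rle (e.symm x) (e.symm y) := Iff.rfl

/-- The composition `PQ` of two plane posets: `x ≤_r y` for every `x ∈ P`, `y ∈ Q`. -/
def comp (P : PlanePoset α) (Q : PlanePoset β) : PlanePoset (α ⊕ β) where
  hle x y :=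
    match x, y with
    | Sum.inl a, Sum.inl b => P.hle a b
    | Sum.inr a, Sum.inr b => Q.hle a b
    | _, _ => False
  rle x y :=
    match x, y with
    | Sum.inl a, Sum.inl b => P.rle a b
    | Sum.inr a, Sum.inr b => Q.rle a b
    | Sum.inl _, Sum.inr _ => True
    | Sum.inr _, Sum.inl _ => False
  hle_refl := by
    rintro (a | a)
    · exact P.hle_refl a
    · exact Q.hle_refl a
  hle_antisymm := by
    rintro (a | a) (b | b) h1 h2
    · exact congrArg Sum.inl (P.hle_antisymm a b h1 h2)
    · exact h1.elim
    · exact h1.elim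
    · exact congrArg Sum.inr (Q.hle_antisymm a b h1 h2)
  hle_trans := by
    rintro (a | a) (b | b) (c | c) h1 h2 <;>
      first
        | exact P.hle_trans _ _ _ h1 h2
        | exact Q.hle_trans _ _ _ h1 h2
        | exact h1.elim
        | exact h2.elim
  rle_refl := by
    rintro (a | a)
    · exact P.rle_refl a
    · exact Q.rle_refl a
  rle_antisymm := by
    rintro (a | a) (b | b) h1 h2
    · exact congrArg Sum.inl (P.rle_antisymm a b h1 h2)
    · exact h2.elim
    · exact h1.elim
    · exact congrArg Sum.inr (Q.rle_antisymm a b h1 h2)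
  rle_trans := by
    rintro (a | a) (b | b) (c | c) h1 h2 <;>
      first
        | exact P.rle_trans _ _ _ h1 h2
        | exact Q.rle_trans _ _ _ h1 h2
        | exact h1.elim
        | exact h2.elim
        | trivial
  compat := by
    rintro (a | a) (b | b) hne
    · exact P.compat a b fun h => hne (congrArg Sum.inl h)
    · show (False ∨ False) ↔ ¬ (True ∨ False)
      simp
    · show (False ∨ False) ↔ ¬ (False ∨ True)
      simp
    · exact Q.compat a b fun h => hne (congrArg Sum.inr h)

/-- The product `P ▷ Q` of two plane posets: `x ≤_h y` for every `x ∈ P`, `y ∈ Q`. -/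
def hcomp (P : PlanePoset α) (Q : PlanePoset β) : PlanePoset (α ⊕ β) where
  hle x y :=
    match x, y with
    | Sum.inl a, Sum.inl b => P.hle a b
    | Sum.inr a, Sum.inr b => Q.hle a b
    | Sum.inl _, Sum.inr _ => True
    | Sum.inr _, Sum.inl _ => False
  rle x y :=
    match x, y with
    | Sum.inl a, Sum.inl b => P.rle a b
    | Sum.inr a, Sum.inr b => Q.rle a b
    | _, _ => False
  hle_refl := by
    rintro (a | a)
    · exact P.hle_refl a
    · exact Q.hle_refl a
  hle_antisymm := by
    rintro (a | a) (b | b) h1 h2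
    · exact congrArg Sum.inl (P.hle_antisymm a b h1 h2)
    · exact h2.elim
    · exact h1.elim
    · exact congrArg Sum.inr (Q.hle_antisymm a b h1 h2)
  hle_trans := by
    rintro (a | a) (b | b) (c | c) h1 h2 <;>
      first
        | exact P.hle_trans _ _ _ h1 h2
        | exact Q.hle_trans _ _ _ h1 h2
        | exact h1.elim
        | exact h2.elim
        | trivial
  rle_refl := by
    rintro (a | a)
    · exact P.rle_refl a
    · exact Q.rle_refl a
  rle_antisymm := by
    rintro (a | a) (b | b) h1 h2
    · exact congrArg Sum.inl (P.rle_antisymm a b h1 h2)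
    · exact h1.elim
    · exact h1.elim
    · exact congrArg Sum.inr (Q.rle_antisymm a b h1 h2)
  rle_trans := by
    rintro (a | a) (b | b) (c | c) h1 h2 <;>
      first
        | exact P.rle_trans _ _ _ h1 h2
        | exact Q.rle_trans _ _ _ h1 h2
        | exact h1.elim
        | exact h2.elim
  compat := by
    rintro (a | a) (b | b) hne
    · exact P.compat a b fun h => hne (congrArg Sum.inl h)
    · show (True ∨ False) ↔ ¬ (False ∨ False)
      simp
    · show (False ∨ True) ↔ ¬ (False ∨ False)
      simp
    · exact Q.compat a b fun h => hne (congrArg Sum.inr h)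

/-- Restriction of a plane poset to a subset (a plane subposet). -/
def res (P : PlanePoset α) (s : Finset α) : PlanePoset {x : α // x ∈ s} where
  hle x y := P.hle x.1 y.1
  rle x y := P.rle x.1 y.1
  hle_refl x := P.hle_refl _
  hle_antisymm x y h1 h2 := Subtype.ext (P.hle_antisymm _ _ h1 h2)
  hle_trans x y z h1 h2 := P.hle_trans _ _ _ h1 h2
  rle_refl x := P.rle_refl _
  rle_antisymm x y h1 h2 := Subtype.ext (P.rle_antisymm _ _ h1 h2)
  rle_trans x y z h1 h2 := P.rle_trans _ _ _ h1 h2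
  compat x y hxy := P.compat _ _ fun h => hxy (Subtype.ext h)

/-- The involution `ι` exchanging the two partial orders. -/
def swap (P : PlanePoset α) : PlanePoset α where
  hle := P.rle
  rle := P.hle
  hle_refl := P.rle_refl
  hle_antisymm := P.rle_antisymm
  hle_trans := P.rle_trans
  rle_refl := P.hle_refl
  rle_antisymm := P.hle_antisymm
  rle_trans := P.hle_trans
  compat x y hxy := by
    have h := P.compat x y hxy
    tauto

end PlanePoset

/-- A plane poset structure on `Fin n` is canonical when the induced total order
is the usual order on `{1, …, n}`. -/
def IsCanon {n : ℕ} (P : PlanePoset (Fin n)) : Prop :=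
  ∀ x y : Fin n, (P.hle x y ∨ P.rle x y) ↔ x ≤ y

/-- `PP(n)`: (isoclasses of) plane posets of cardinality `n`, realized as the canonical
plane poset structures on `{1, …, n}`. -/
def CanonPP (n : ℕ) : Type := { P : PlanePoset (Fin n) // IsCanon P }

namespace CanonPP

/-- The empty plane poset, unit of both products. -/
def one : CanonPP 0 :=
  ⟨{ hle := fun _ _ => True
     rle := fun _ _ => True
     hle_refl := fun _ => trivial
     hle_antisymm := fun x => x.elim0
     hle_trans := fun _ _ _ _ _ => trivial
     rle_refl := fun _ => trivial
     rle_antisymm := fun x => x.elim0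
     rle_trans := fun _ _ _ _ _ => trivial
     compat := fun x => x.elim0 }, fun x => x.elim0⟩

/-- The composition `PQ` of plane posets, realized canonically. -/
def comp {k l : ℕ} (P : CanonPP k) (Q : CanonPP l) : CanonPP (k + l) :=
  ⟨(P.1.comp Q.1).map finSumFinEquiv, by
    intro x y
    obtain ⟨a, rfl⟩ := finSumFinEquiv.surjective x
    obtain ⟨b, rfl⟩ := finSumFinEquiv.surjective y
    simp only [PlanePoset.map_hle, PlanePoset.map_rle, Equiv.symm_apply_apply]
    rcases a with a | a <;> rcases b with b | b
    · show (P.1.hle a b ∨ P.1.rle a b) ↔ _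
      rw [P.2 a b, finSumFinEquiv_apply_left, finSumFinEquiv_apply_left]
      simp only [Fin.le_def, Fin.coe_castAdd]
      try omega
    · show (False ∨ True) ↔ _
      rw [finSumFinEquiv_apply_left, finSumFinEquiv_apply_right]
      have ha := a.isLt
      simp only [false_or, true_iff, Fin.le_def, Fin.coe_castAdd, Fin.coe_natAdd]
      omega
    · show (False ∨ False) ↔ _
      rw [finSumFinEquiv_apply_right, finSumFinEquiv_apply_left]
      have hb := b.isLt
      simp only [or_self, false_iff, Fin.le_def, Fin.coe_natAdd, Fin.coe_castAdd]
      omega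
    · show (Q.1.hle a b ∨ Q.1.rle a b) ↔ _
      rw [Q.2 a b, finSumFinEquiv_apply_right, finSumFinEquiv_apply_right]
      simp only [Fin.le_def, Fin.coe_natAdd]
      omega⟩

/-- The product `P ▷ Q` of plane posets, realized canonically. -/
def hcomp {k l : ℕ} (P : CanonPP k) (Q : CanonPP l) : CanonPP (k + l) :=
  ⟨(P.1.hcomp Q.1).map finSumFinEquiv, by
    intro x y
    obtain ⟨a, rfl⟩ := finSumFinEquiv.surjective x
    obtain ⟨b, rfl⟩ := finSumFinEquiv.surjective y
    simp only [PlanePoset.map_hle, PlanePoset.map_rle, Equiv.symm_apply_apply]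
    rcases a with a | a <;> rcases b with b | b
    · show (P.1.hle a b ∨ P.1.rle a b) ↔ _
      rw [P.2 a b, finSumFinEquiv_apply_left, finSumFinEquiv_apply_left]
      simp only [Fin.le_def, Fin.coe_castAdd]
      try omega
    · show (True ∨ False) ↔ _
      rw [finSumFinEquiv_apply_left, finSumFinEquiv_apply_right]
      have ha := a.isLt
      simp only [or_false, true_iff, Fin.le_def, Fin.coe_castAdd, Fin.coe_natAdd]
      omega
    · show (False ∨ False) ↔ _
      rw [finSumFinEquiv_apply_right, finSumFinEquiv_apply_left]
      have hb := b.isLt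
      simp only [or_self, false_iff, Fin.le_def, Fin.coe_natAdd, Fin.coe_castAdd]
      omega
    · show (Q.1.hle a b ∨ Q.1.rle a b) ↔ _
      rw [Q.2 a b, finSumFinEquiv_apply_right, finSumFinEquiv_apply_right]
      simp only [Fin.le_def, Fin.coe_natAdd]
      omega⟩

/-- Restriction of a plane poset to a plane subposet, realized canonically via the unique
increasing bijection. -/
def restrict {n : ℕ} (P : CanonPP n) (s : Finset (Fin n)) : CanonPP s.card :=
  ⟨(P.1.res s).map (s.orderIsoOfFin rfl).toEquiv.symm, by
    intro i j
    simp only [PlanePoset.map_hle, PlanePoset.map_rle, Equiv.symm_symm]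
    show (P.1.hle ((s.orderIsoOfFin rfl).toEquiv i).1 ((s.orderIsoOfFin rfl).toEquiv j).1 ∨
          P.1.rle ((s.orderIsoOfFin rfl).toEquiv i).1 ((s.orderIsoOfFin rfl).toEquiv j).1) ↔ i ≤ j
    rw [P.2]
    rw [Subtype.coe_le_coe]
    exact (s.orderIsoOfFin rfl).le_iff_le⟩

/-- The involution `ι`, on canonical plane posets. -/
def iota {n : ℕ} (P : CanonPP n) : CanonPP n :=
  ⟨P.1.swap, fun x y => by rw [or_comm]; exact P.2 x y⟩

end CanonPP

/-- The partial (weak Bruhat) order on `PP(n)`: `P ≤ Q` iff `x ≤_h y` in `Q` implies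
`x ≤_h y` in `P` (the increasing bijection between canonical representatives being
the identity). -/
def PPle {n : ℕ} (P Q : CanonPP n) : Prop :=
  ∀ x y : Fin n, Q.1.hle x y → P.1.hle x y

/-- Strict version of the order on `PP(n)`. -/
def PPlt {n : ℕ} (P Q : CanonPP n) : Prop := PPle P Q ∧ P ≠ Q

/-- Covering relation of the poset `(PP(n), ≤)`. -/
def PPcovBy {n : ℕ} (P Q : CanonPP n) : Prop :=
  PPlt P Q ∧ ∀ T : CanonPP n, PPlt P T → ¬ PPlt T Q

/-- `E(P) = {(i,j) | i <_h j}`. -/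
def Eset {n : ℕ} (P : CanonPP n) : Set (Fin n × Fin n) :=
  {p | P.1.hle p.1 p.2 ∧ p.1 ≠ p.2}

/-- A biideal of a plane poset: an ideal for both partial orders, equivalently an ideal
for the induced total order. -/
def IsBiideal {n : ℕ} (P : CanonPP n) (I : Finset (Fin n)) : Prop :=
  ∀ x y : Fin n, x ∈ I → (P.1.hle x y ∨ P.1.rle x y) → y ∈ I

/-- `h_s^t = #{(x,y) ∈ s × t | x <_h y}`. -/
def hNum {n : ℕ} (P : CanonPP n) (s t : Finset (Fin n)) : ℕ :=
  ((s ×ˢ t).filter (fun p : Fin n × Fin n => P.1.hle p.1 p.2 ∧ p.1 ≠ p.2)).card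

/-- `φ(P,Q) = #{(x,y) | x <_r y in P and x <_h y in Q} + #{(x,y) | x <_h y in P and
x <_r y in Q}` (via the identity increasing bijection). -/
def phi {n : ℕ} (P Q : CanonPP n) : ℕ :=
  (Finset.univ.filter (fun p : Fin n × Fin n =>
      (P.1.rle p.1 p.2 ∧ p.1 ≠ p.2) ∧ (Q.1.hle p.1 p.2 ∧ p.1 ≠ p.2))).card +
  (Finset.univ.filter (fun p : Fin n × Fin n =>
      (P.1.hle p.1 p.2 ∧ p.1 ≠ p.2) ∧ (Q.1.rle p.1 p.2 ∧ p.1 ≠ p.2))).card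

/-- The level `ℓ(P) = #{(x,y) | x <_r y}`. -/
def level {n : ℕ} (P : CanonPP n) : ℕ :=
  (Finset.univ.filter (fun p : Fin n × Fin n => P.1.rle p.1 p.2 ∧ p.1 ≠ p.2)).card

/-- The plane poset `P_σ = Ψ_n(σ)` associated to a permutation `σ`. -/
def PsiPerm {n : ℕ} (σ : Equiv.Perm (Fin n)) : CanonPP n :=
  ⟨{ hle := fun i j => i ≤ j ∧ σ.symm i ≤ σ.symm j
     rle := fun i j => i ≤ j ∧ σ.symm j ≤ σ.symm i
     hle_refl := fun x => ⟨le_refl x, le_refl _⟩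
     hle_antisymm := fun x y h1 h2 => le_antisymm h1.1 h2.1
     hle_trans := fun x y z h1 h2 => ⟨le_trans h1.1 h2.1, le_trans h1.2 h2.2⟩
     rle_refl := fun x => ⟨le_refl x, le_refl _⟩
     rle_antisymm := fun x y h1 h2 => le_antisymm h1.1 h2.1
     rle_trans := fun x y z h1 h2 => ⟨le_trans h1.1 h2.1, le_trans h2.2 h1.2⟩
     compat := by
       intro x y hxy
       have h1 : (x : ℕ) ≠ (y : ℕ) := fun h => hxy (Fin.ext h)
       have h2 : ((σ.symm x : Fin n) : ℕ) ≠ ((σ.symm y : Fin n) : ℕ) :=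
         fun h => hxy (σ.symm.injective (Fin.ext h))
       simp only [Fin.le_def]
       omega },
   by
     intro x y
     show ((x ≤ y ∧ σ.symm x ≤ σ.symm y) ∨ (x ≤ y ∧ σ.symm y ≤ σ.symm x)) ↔ x ≤ y
     simp only [Fin.le_def]
     omega⟩

/-- One step of the weak Bruhat order: exchange two consecutive letters `i < j`
(`i` appearing immediately before `j`) in the word `σ(1) ⋯ σ(n)`. -/
def bruhatStep {n : ℕ} (σ τ : Equiv.Perm (Fin n)) : Prop :=
  ∃ (i j k : Fin n) (hk : (k : ℕ) + 1 < n),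
    i < j ∧ σ k = i ∧ σ ⟨(k : ℕ) + 1, hk⟩ = j ∧ τ = Equiv.swap i j * σ

/-- The set of (isoclasses of) plane posets. -/
abbrev PPS : Type := Σ n : ℕ, CanonPP n

/-- Composition product on plane posets. -/
def PPS.comp (P Q : PPS) : PPS := ⟨P.1 + Q.1, P.2.comp Q.2⟩

/-- The product `▷` on plane posets. -/
def PPS.hcomp (P Q : PPS) : PPS := ⟨P.1 + Q.1, P.2.hcomp Q.2⟩

/-- Value of the coproduct `Δ_q` on a plane poset:
`Δ_q(P) = Σ_{I biideal of P} q^{h_{P∖I}^I} (P∖I) ⊗ I`. -/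
def deltaOn (K : Type) [Field K] (q : K) {n : ℕ} (P : CanonPP n) :
    (PPS →₀ K) ⊗[K] (PPS →₀ K) :=
  ∑ I ∈ Finset.univ.filter (fun I : Finset (Fin n) => IsBiideal P I),
    q ^ hNum P Iᶜ I •
      (Finsupp.single (⟨Iᶜ.card, P.restrict Iᶜ⟩ : PPS) (1 : K) ⊗ₜ[K]
        Finsupp.single (⟨I.card, P.restrict I⟩ : PPS) (1 : K))

/-- The coproduct `Δ_q` on `h_PP`, extended linearly. -/
def Delta (K : Type) [Field K] (q : K) :
    (PPS →₀ K) →ₗ[K] (PPS →₀ K) ⊗[K] (PPS →₀ K) :=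
  Finsupp.lift _ K PPS fun P => deltaOn K q P.2

/-- The composition product `m`, extended bilinearly to `h_PP`. -/
def mulPP (K : Type) [Field K] : (PPS →₀ K) →ₗ[K] (PPS →₀ K) →ₗ[K] (PPS →₀ K) :=
  Finsupp.lift _ K PPS fun P =>
    Finsupp.lift _ K PPS fun Q => Finsupp.single (PPS.comp P Q) 1

/-- The componentwise product on `h_PP ⊗ h_PP`. -/
def mulT (K : Type) [Field K] :
    ((PPS →₀ K) ⊗[K] (PPS →₀ K)) →ₗ[K] ((PPS →₀ K) ⊗[K] (PPS →₀ K)) →ₗ[K]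
      ((PPS →₀ K) ⊗[K] (PPS →₀ K)) :=
  TensorProduct.map₂ (mulPP K) (mulPP K)

/-- Multiplication of the basis element of a plane poset by `q^{n·c}` where `n` is its
cardinality. -/
def scale (K : Type) [Field K] (q : K) (c : ℕ) : (PPS →₀ K) →ₗ[K] (PPS →₀ K) :=
  Finsupp.lift _ K PPS fun P => q ^ (P.1 * c) • Finsupp.single P 1

/-- Right multiplication by a plane poset for the product `▷`. -/
def rmulH (K : Type) [Field K] (Q : PPS) : (PPS →₀ K) →ₗ[K] (PPS →₀ K) :=
  Finsupp.lift _ K PPS fun P => Finsupp.single (PPS.hcomp P Q) 1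

/-- Left multiplication by a plane poset for the product `▷`. -/
def lmulH (K : Type) [Field K] (P : PPS) : (PPS →₀ K) →ₗ[K] (PPS →₀ K) :=
  Finsupp.lift _ K PPS fun Q => Finsupp.single (PPS.hcomp P Q) 1

/-- The pairing on plane posets of the same cardinality:
`⟨P,Q⟩_q = q^{φ(P,Q)}` if `ι(P) ≤ Q`, and `0` otherwise. -/
def pairN (K : Type) [Field K] (q : K) {n : ℕ} (P Q : CanonPP n) : K :=
  if PPle (CanonPP.iota P) Q then q ^ phi P Q else 0

/-- The pairing `⟨-,-⟩_q` on plane posets (zero on posets of different cardinalities). -/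
def pairPP (K : Type) [Field K] (q : K) (P Q : PPS) : K :=
  if h : P.1 = Q.1 then pairN K q (cast (congrArg CanonPP h) P.2) Q.2 else 0

/-- The pairing `⟨-,-⟩_q`, extended bilinearly to `h_PP`. -/
def Bform (K : Type) [Field K] (q : K) : (PPS →₀ K) →ₗ[K] (PPS →₀ K) →ₗ[K] K :=
  Finsupp.lift _ K PPS fun P => Finsupp.lift K K PPS fun Q => pairPP K q P Q

end

section Aux3

open Finset

theorem PlanePoset.ext' {α : Type} {P Q : PlanePoset α}
    (hh : ∀ x y, P.hle x y ↔ Q.hle x y) (hr : ∀ x y, P.rle x y ↔ Q.rle x y) : P = Q := by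
  have h1 : P.hle = Q.hle := funext fun x => funext fun y => propext (hh x y)
  have h2 : P.rle = Q.rle := funext fun x => funext fun y => propext (hr x y)
  cases P; cases Q
  simp only at h1 h2
  cases h1; cases h2; rfl

theorem canon_rle_iff {n : ℕ} {P : CanonPP n} (x y : Fin n) :
    P.1.rle x y ↔ (x ≤ y ∧ (x = y ∨ ¬ P.1.hle x y)) := by
  by_cases hxy : x = y
  · subst hxy; simp [P.1.rle_refl, le_refl]
  · have hc := P.1.compat x y hxy
    have ht := P.2 x y
    have ht' := P.2 y x
    constructor
    · intro hr
      exact ⟨ht.mp (Or.inr hr), Or.inr fun hh => (hc.mp (Or.inl hh)) (Or.inl hr)⟩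
    · rintro ⟨hle, h⟩
      rcases h with rfl | hnh
      · exact P.1.rle_refl x
      · rcases ht.mpr hle with h | h
        · exact absurd h hnh
        · exact h

theorem canonPP_ext {n : ℕ} {P Q : CanonPP n} (h : ∀ x y, P.1.hle x y ↔ Q.1.hle x y) : P = Q := by
  refine Subtype.ext (PlanePoset.ext' h fun x y => ?_)
  rw [canon_rle_iff, canon_rle_iff, h x y]

theorem ppsEq {n m : ℕ} (h : n = m) (P : CanonPP n) (R : CanonPP m)
    (hh : ∀ x y : Fin n, P.1.hle x y ↔ R.1.hle (Fin.cast h x) (Fin.cast h y)) :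
    (⟨n, P⟩ : PPS) = ⟨m, R⟩ := by
  subst h
  exact congrArg _ (canonPP_ext hh)

theorem hle_congr {n : ℕ} (P : CanonPP n) {a a' b b' : Fin n} (ha : a.val = a'.val)
    (hb : b.val = b'.val) : P.1.hle a b ↔ P.1.hle a' b' := by
  rw [Fin.val_injective ha, Fin.val_injective hb]

theorem finSumFinEquiv_symm_of_lt {k l : ℕ} {x : Fin (k + l)} (h : x.val < k) :
    finSumFinEquiv.symm x = Sum.inl ⟨x.val, h⟩ := by
  have hx : x = Fin.castAdd l ⟨x.val, h⟩ := Fin.ext rfl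
  conv_lhs => rw [hx]
  exact finSumFinEquiv_symm_apply_castAdd _

theorem finSumFinEquiv_symm_of_ge {k l : ℕ} {x : Fin (k + l)} (h : k ≤ x.val) :
    finSumFinEquiv.symm x = Sum.inr ⟨x.val - k, by have := x.isLt; omega⟩ := by
  have hx : x = Fin.natAdd k ⟨x.val - k, by have := x.isLt; omega⟩ := Fin.ext (by simp; omega)
  conv_lhs => rw [hx]
  exact finSumFinEquiv_symm_apply_natAdd _

theorem comp_hle_ll {k l : ℕ} (P : CanonPP k) (Q : CanonPP l) {x y : Fin (k + l)}
    (hx : x.val < k) (hy : y.val < k) :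
    (P.comp Q).1.hle x y ↔ P.1.hle ⟨x.val, hx⟩ ⟨y.val, hy⟩ := by
  show (P.1.comp Q.1).hle (finSumFinEquiv.symm x) (finSumFinEquiv.symm y) ↔ _
  rw [finSumFinEquiv_symm_of_lt hx, finSumFinEquiv_symm_of_lt hy]
  exact Iff.rfl

theorem comp_hle_rr {k l : ℕ} (P : CanonPP k) (Q : CanonPP l) {x y : Fin (k + l)}
    (hx : k ≤ x.val) (hy : k ≤ y.val) :
    (P.comp Q).1.hle x y ↔
      Q.1.hle ⟨x.val - k, by have := x.isLt; omega⟩ ⟨y.val - k, by have := y.isLt; omega⟩ := by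
  show (P.1.comp Q.1).hle (finSumFinEquiv.symm x) (finSumFinEquiv.symm y) ↔ _
  rw [finSumFinEquiv_symm_of_ge hx, finSumFinEquiv_symm_of_ge hy]
  exact Iff.rfl

theorem comp_hle_lr {k l : ℕ} (P : CanonPP k) (Q : CanonPP l) {x y : Fin (k + l)}
    (hx : x.val < k) (hy : k ≤ y.val) : ¬ (P.comp Q).1.hle x y := by
  show ¬ (P.1.comp Q.1).hle (finSumFinEquiv.symm x) (finSumFinEquiv.symm y)
  rw [finSumFinEquiv_symm_of_lt hx, finSumFinEquiv_symm_of_ge hy]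
  exact not_false

theorem comp_hle_rl {k l : ℕ} (P : CanonPP k) (Q : CanonPP l) {x y : Fin (k + l)}
    (hx : k ≤ x.val) (hy : y.val < k) : ¬ (P.comp Q).1.hle x y := by
  show ¬ (P.1.comp Q.1).hle (finSumFinEquiv.symm x) (finSumFinEquiv.symm y)
  rw [finSumFinEquiv_symm_of_ge hx, finSumFinEquiv_symm_of_lt hy]
  exact not_false

theorem restrict_hle {n : ℕ} (P : CanonPP n) (s : Finset (Fin n)) (i j : Fin s.card) :
    (P.restrict s).1.hle i j ↔
      P.1.hle ((s.orderIsoOfFin rfl) i).1 ((s.orderIsoOfFin rfl) j).1 := Iff.rfl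

end Aux3
section Aux4

open Finset

/-- The upper set of `Fin n` with cut point `c`. -/
def usetF (n c : ℕ) : Finset (Fin n) := Finset.univ.filter (fun x => c ≤ x.val)

theorem mem_usetF {n c : ℕ} {x : Fin n} : x ∈ usetF n c ↔ c ≤ x.val := by
  simp [usetF]

theorem mem_usetF_compl {n c : ℕ} {x : Fin n} : x ∈ (usetF n c)ᶜ ↔ x.val < c := by
  rw [Finset.mem_compl, mem_usetF]
  omega

theorem card_usetF {n c : ℕ} : (usetF n c).card = n - c := by
  have h : (usetF n c).card = (Finset.Ico c n).card := by
    apply Finset.card_nbij (i := Fin.val)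
    · intro a ha
      rw [Finset.mem_coe, mem_usetF] at ha
      rw [Finset.mem_coe, Finset.mem_Ico]
      exact ⟨ha, a.isLt⟩
    · intro a _ b _ hab
      exact Fin.val_injective hab
    · intro b hb
      simp only [Finset.coe_Ico, Set.mem_Ico] at hb
      refine ⟨⟨b, hb.2⟩, ?_, rfl⟩
      rw [Finset.mem_coe, mem_usetF]
      exact hb.1
  rw [h, Nat.card_Ico]

theorem card_usetF_compl {n c : ℕ} (h : c ≤ n) : (usetF n c)ᶜ.card = c := by
  rw [Finset.card_compl, card_usetF, Fintype.card_fin]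
  omega

theorem orderIso_usetF {n c : ℕ} (i : Fin (usetF n c).card) :
    (((usetF n c).orderIsoOfFin rfl) i).1.val = c + i.val := by
  have hc : (usetF n c).card = n - c := card_usetF
  have hcn : c ≤ n := by
    by_contra hcon
    have h0 : (usetF n c).card = 0 := by omega
    have := i.isLt
    omega
  have hb : ∀ j : Fin (usetF n c).card, c + j.val < n := by
    intro j; have := j.isLt; omega
  set f : Fin (usetF n c).card → Fin n := fun j => ⟨c + j.val, hb j⟩ with hf
  have hfs : ∀ x, f x ∈ usetF n c := fun x => mem_usetF.mpr (by simp [hf])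
  have hmono : StrictMono f := fun a b hab => by
    simp only [hf, Fin.mk_lt_mk]
    have : a.val < b.val := hab
    omega
  have huniq := Finset.orderEmbOfFin_unique (rfl : (usetF n c).card = (usetF n c).card) hfs hmono
  have h2 : (((usetF n c).orderIsoOfFin rfl) i : Fin n) = f i := by
    rw [Finset.coe_orderIsoOfFin_apply, ← huniq]
  rw [h2]

theorem orderIso_usetF_compl {n c : ℕ} (i : Fin (usetF n c)ᶜ.card) :
    (((usetF n c)ᶜ.orderIsoOfFin rfl) i).1.val = i.val := by
  have hc : (usetF n c)ᶜ.card = n - (n - c) := by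
    rw [Finset.card_compl, card_usetF, Fintype.card_fin]
  have hb : ∀ j : Fin (usetF n c)ᶜ.card, j.val < n := by
    intro j; have := j.isLt; omega
  set f : Fin (usetF n c)ᶜ.card → Fin n := fun j => ⟨j.val, hb j⟩ with hf
  have hfs : ∀ x, f x ∈ (usetF n c)ᶜ := fun x => mem_usetF_compl.mpr (by
    simp only [hf]
    have := x.isLt
    omega)
  have hmono : StrictMono f := fun a b hab => by
    simp only [hf, Fin.mk_lt_mk]
    exact hab
  have huniq := Finset.orderEmbOfFin_unique
    (rfl : (usetF n c)ᶜ.card = (usetF n c)ᶜ.card) hfs hmono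
  have h2 : (((usetF n c)ᶜ.orderIsoOfFin rfl) i : Fin n) = f i := by
    rw [Finset.coe_orderIsoOfFin_apply, ← huniq]
  rw [h2]

theorem usetF_biideal {n : ℕ} (P : CanonPP n) (c : ℕ) : IsBiideal P (usetF n c) := by
  intro x y hx hxy
  rw [mem_usetF] at hx ⊢
  have : x ≤ y := (P.2 x y).mp hxy
  have : x.val ≤ y.val := this
  omega

theorem biideal_eq_usetF {n : ℕ} (P : CanonPP n) (I : Finset (Fin n)) (hI : IsBiideal P I) :
    I = usetF n (n - I.card) := by
  have hup : ∀ x ∈ I, ∀ y : Fin n, x ≤ y → y ∈ I := by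
    intro x hx y hxy
    exact hI x y hx ((P.2 x y).mpr hxy)
  ext x
  rw [mem_usetF]
  constructor
  · intro hx
    have hsub : Finset.Ici x ⊆ I := fun y hy => hup x hx y (Finset.mem_Ici.mp hy)
    have hcard := Finset.card_le_card hsub
    rw [Fin.card_Ici] at hcard
    have := x.isLt
    omega
  · intro hx
    have hIne : I.Nonempty := by
      rw [← Finset.card_pos]
      have := x.isLt
      omega
    set m := I.min' hIne with hm
    have hmI : m ∈ I := I.min'_mem hIne
    have hsub : I ⊆ Finset.Ici m := fun y hy => Finset.mem_Ici.mpr (I.min'_le y hy)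
    have hcard := Finset.card_le_card hsub
    rw [Fin.card_Ici] at hcard
    have hmx : m ≤ x := by
      have := m.isLt
      rw [Fin.le_def]
      omega
    exact hup m hmI x hmx

theorem deltaOn_eq (K : Type) [Field K] (q : K) {n : ℕ} (P : CanonPP n) :
    deltaOn K q P = ∑ c ∈ Finset.range (n + 1),
      q ^ hNum P (usetF n c)ᶜ (usetF n c) •
        (Finsupp.single (⟨(usetF n c)ᶜ.card, P.restrict (usetF n c)ᶜ⟩ : PPS) (1 : K) ⊗ₜ[K]
         Finsupp.single (⟨(usetF n c).card, P.restrict (usetF n c)⟩ : PPS) (1 : K)) := by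
  rw [deltaOn]
  refine (Finset.sum_bij (fun c _ => usetF n c) ?_ ?_ ?_ ?_).symm
  · intro c _
    exact Finset.mem_filter.mpr ⟨Finset.mem_univ _, usetF_biideal P c⟩
  · intro a ha b hb hab
    rw [Finset.mem_range] at ha hb
    have hab' : usetF n a = usetF n b := hab
    have h1 : (usetF n a).card = (usetF n b).card := by rw [hab']
    rw [card_usetF, card_usetF] at h1
    omega
  · intro I hI
    rw [Finset.mem_filter] at hI
    refine ⟨n - I.card, Finset.mem_range.mpr (by omega), (biideal_eq_usetF P I hI.2).symm⟩
  · intro c _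
    rfl

end Aux4
section Aux5

open Finset

theorem mem_hNum_filter {n : ℕ} {P : CanonPP n} {s t : Finset (Fin n)} {p : Fin n × Fin n} :
    p ∈ ((s ×ˢ t).filter (fun p : Fin n × Fin n => P.1.hle p.1 p.2 ∧ p.1 ≠ p.2)) ↔
      p.1 ∈ s ∧ p.2 ∈ t ∧ P.1.hle p.1 p.2 ∧ p.1 ≠ p.2 := by
  rw [Finset.mem_filter, Finset.mem_product]
  tauto

theorem hNum_comp_lower {k l c : ℕ} (P : CanonPP k) (Q : CanonPP l) (hc : c ≤ k) :
    hNum (P.comp Q) (usetF (k + l) c)ᶜ (usetF (k + l) c) = hNum P (usetF k c)ᶜ (usetF k c) := by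
  unfold hNum
  have key : ∀ p : (Fin (k + l)) × (Fin (k + l)),
      p ∈ (((usetF (k + l) c)ᶜ ×ˢ usetF (k + l) c).filter
        (fun p => (P.comp Q).1.hle p.1 p.2 ∧ p.1 ≠ p.2)) →
      p.1.val < k ∧ p.2.val < k := by
    intro p hp
    rw [mem_hNum_filter] at hp
    obtain ⟨h1, h2, h3, _⟩ := hp
    rw [mem_usetF_compl] at h1
    have hx : p.1.val < k := by omega
    refine ⟨hx, ?_⟩
    by_contra hy
    exact comp_hle_lr P Q hx (by omega) h3
  refine Finset.card_bij'
    (fun p hp => ((⟨p.1.val, (key p hp).1⟩ : Fin k), (⟨p.2.val, (key p hp).2⟩ : Fin k)))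
    (fun p _ => ((Fin.castLE (by omega : k ≤ k + l) p.1), (Fin.castLE (by omega) p.2)))
    ?_ ?_ ?_ ?_
  · intro p hp
    have hk := key p hp
    rw [mem_hNum_filter] at hp ⊢
    obtain ⟨h1, h2, h3, h4⟩ := hp
    rw [mem_usetF_compl] at h1
    rw [mem_usetF] at h2
    refine ⟨mem_usetF_compl.mpr h1, mem_usetF.mpr h2, ?_, ?_⟩
    · exact (comp_hle_ll P Q hk.1 hk.2).mp h3
    · intro hcon
      have hv := congrArg Fin.val hcon
      exact h4 (Fin.val_injective (show p.1.val = p.2.val from hv))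
  · intro p hp
    rw [mem_hNum_filter] at hp ⊢
    obtain ⟨h1, h2, h3, h4⟩ := hp
    rw [mem_usetF_compl] at h1
    rw [mem_usetF] at h2
    have hb1 : (Fin.castLE (by omega : k ≤ k + l) p.1).val < k := p.1.isLt
    have hb2 : (Fin.castLE (by omega : k ≤ k + l) p.2).val < k := p.2.isLt
    refine ⟨mem_usetF_compl.mpr h1, mem_usetF.mpr h2, ?_, ?_⟩
    · exact (comp_hle_ll P Q hb1 hb2).mpr ((hle_congr P rfl rfl).mpr h3)
    · intro hcon
      have hv := congrArg Fin.val hcon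
      exact h4 (Fin.val_injective (show p.1.val = p.2.val from hv))
  · intro p _
    exact Prod.ext (Fin.ext rfl) (Fin.ext rfl)
  · intro p _
    exact Prod.ext (Fin.ext rfl) (Fin.ext rfl)

theorem hNum_comp_upper {k l c : ℕ} (P : CanonPP k) (Q : CanonPP l) (hc : c ≤ l) :
    hNum (P.comp Q) (usetF (k + l) (k + c))ᶜ (usetF (k + l) (k + c))
      = hNum Q (usetF l c)ᶜ (usetF l c) := by
  unfold hNum
  have key : ∀ p : (Fin (k + l)) × (Fin (k + l)),
      p ∈ (((usetF (k + l) (k + c))ᶜ ×ˢ usetF (k + l) (k + c)).filter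
        (fun p => (P.comp Q).1.hle p.1 p.2 ∧ p.1 ≠ p.2)) →
      k ≤ p.1.val ∧ k ≤ p.2.val := by
    intro p hp
    rw [mem_hNum_filter] at hp
    obtain ⟨h1, h2, h3, _⟩ := hp
    rw [mem_usetF] at h2
    have hy : k ≤ p.2.val := by omega
    refine ⟨?_, hy⟩
    by_contra hx
    exact comp_hle_lr P Q (by omega) hy h3
  refine Finset.card_bij'
    (fun p hp => ((⟨p.1.val - k, by have := p.1.isLt; have := (key p hp).1; omega⟩ : Fin l),
                  (⟨p.2.val - k, by have := p.2.isLt; have := (key p hp).2; omega⟩ : Fin l)))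
    (fun p _ => ((⟨k + p.1.val, by have := p.1.isLt; omega⟩ : Fin (k + l)),
                 (⟨k + p.2.val, by have := p.2.isLt; omega⟩ : Fin (k + l))))
    ?_ ?_ ?_ ?_
  · intro p hp
    have hk := key p hp
    rw [mem_hNum_filter] at hp ⊢
    obtain ⟨h1, h2, h3, h4⟩ := hp
    rw [mem_usetF_compl] at h1
    rw [mem_usetF] at h2
    refine ⟨mem_usetF_compl.mpr (show p.1.val - k < c by omega),
            mem_usetF.mpr (show c ≤ p.2.val - k by omega), ?_, ?_⟩
    · exact (hle_congr Q rfl rfl).mp ((comp_hle_rr P Q hk.1 hk.2).mp h3)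
    · intro hcon
      have hv := congrArg Fin.val hcon
      have hv' : p.1.val - k = p.2.val - k := hv
      have h5 : p.1.val ≠ p.2.val := fun h => h4 (Fin.val_injective h)
      omega
  · intro p hp
    rw [mem_hNum_filter] at hp ⊢
    obtain ⟨h1, h2, h3, h4⟩ := hp
    rw [mem_usetF_compl] at h1
    rw [mem_usetF] at h2
    refine ⟨mem_usetF_compl.mpr (show k + p.1.val < k + c by omega),
            mem_usetF.mpr (show k + c ≤ k + p.2.val by omega), ?_, ?_⟩
    · refine (comp_hle_rr P Q (show k ≤ k + p.1.val by omega)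
        (show k ≤ k + p.2.val by omega)).mpr ?_
      exact (hle_congr Q (show (k + p.1.val) - k = p.1.val by omega).symm
        (show (k + p.2.val) - k = p.2.val by omega).symm).mp h3
    · intro hcon
      have hv := congrArg Fin.val hcon
      have hv' : k + p.1.val = k + p.2.val := hv
      have h5 : p.1.val ≠ p.2.val := fun h => h4 (Fin.val_injective h)
      omega
  · intro p hp
    have hk := key p hp
    refine Prod.ext (Fin.ext ?_) (Fin.ext ?_)
    · show k + (p.1.val - k) = p.1.val
      omega
    · show k + (p.2.val - k) = p.2.val
      omega
  · intro p _
    refine Prod.ext (Fin.ext ?_) (Fin.ext ?_)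
    · show (k + p.1.val) - k = p.1.val
      omega
    · show (k + p.2.val) - k = p.2.val
      omega

theorem hNum_zero_cut {l : ℕ} (Q : CanonPP l) :
    hNum Q (usetF l 0)ᶜ (usetF l 0) = 0 := by
  have h : (usetF l 0)ᶜ = ∅ := by
    rw [Finset.eq_empty_iff_forall_notMem]
    intro x hx
    rw [mem_usetF_compl] at hx
    omega
  simp [hNum, h]

end Aux5
section Aux6

open Finset

theorem ppsE1 {k l : ℕ} (P : CanonPP k) (Q : CanonPP l) {c : ℕ} (hc : c ≤ k) :
    (⟨(usetF k c)ᶜ.card + 0, (P.restrict (usetF k c)ᶜ).comp CanonPP.one⟩ : PPS)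
      = ⟨(usetF (k + l) c)ᶜ.card, (P.comp Q).restrict (usetF (k + l) c)ᶜ⟩ := by
  have hck : (usetF k c)ᶜ.card = c := card_usetF_compl hc
  have hck2 : (usetF (k + l) c)ᶜ.card = c := card_usetF_compl (by omega)
  have h : (usetF k c)ᶜ.card + 0 = (usetF (k + l) c)ᶜ.card := by omega
  refine ppsEq h _ _ (fun x y => ?_)
  have hx : x.val < (usetF k c)ᶜ.card := x.isLt
  have hy : y.val < (usetF k c)ᶜ.card := y.isLt
  simp only [restrict_hle]
  set a := ((((usetF (k + l) c)ᶜ).orderIsoOfFin rfl) (Fin.cast h x)).1 with hadef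
  set b := ((((usetF (k + l) c)ᶜ).orderIsoOfFin rfl) (Fin.cast h y)).1 with hbdef
  have hav : a.val = x.val := by rw [hadef, orderIso_usetF_compl]; simp
  have hbv : b.val = y.val := by rw [hbdef, orderIso_usetF_compl]; simp
  rw [comp_hle_ll _ _ hx hy, restrict_hle,
    comp_hle_ll P Q (show a.val < k by omega) (show b.val < k by omega)]
  refine hle_congr P ?_ ?_ <;>
    simp only [orderIso_usetF_compl, Fin.val_mk] <;> omega

theorem ppsE2 {k l : ℕ} (P : CanonPP k) (Q : CanonPP l) {c : ℕ} (hc : c ≤ k) :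
    (⟨(usetF k c).card + l, (P.restrict (usetF k c)).comp Q⟩ : PPS)
      = ⟨(usetF (k + l) c).card, (P.comp Q).restrict (usetF (k + l) c)⟩ := by
  have hck : (usetF k c).card = k - c := card_usetF
  have h : (usetF k c).card + l = (usetF (k + l) c).card := by
    rw [card_usetF, card_usetF]; omega
  refine ppsEq h _ _ (fun x y => ?_)
  have hx := x.isLt
  have hy := y.isLt
  simp only [restrict_hle]
  set a := (((usetF (k + l) c).orderIsoOfFin rfl) (Fin.cast h x)).1 with hadef
  set b := (((usetF (k + l) c).orderIsoOfFin rfl) (Fin.cast h y)).1 with hbdef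
  have hav : a.val = c + x.val := by rw [hadef, orderIso_usetF]; simp
  have hbv : b.val = c + y.val := by rw [hbdef, orderIso_usetF]; simp
  rcases Nat.lt_or_ge x.val (usetF k c).card with hx1 | hx1 <;>
    rcases Nat.lt_or_ge y.val (usetF k c).card with hy1 | hy1
  · rw [comp_hle_ll _ _ hx1 hy1, restrict_hle,
      comp_hle_ll P Q (show a.val < k by omega) (show b.val < k by omega)]
    refine hle_congr P ?_ ?_ <;>
      simp only [orderIso_usetF, Fin.val_mk] <;> omega
  · exact iff_of_false (comp_hle_lr _ _ hx1 hy1)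
      (comp_hle_lr P Q (show a.val < k by omega) (show k ≤ b.val by omega))
  · exact iff_of_false (comp_hle_rl _ _ hx1 hy1)
      (comp_hle_rl P Q (show k ≤ a.val by omega) (show b.val < k by omega))
  · rw [comp_hle_rr _ _ hx1 hy1,
      comp_hle_rr P Q (show k ≤ a.val by omega) (show k ≤ b.val by omega)]
    refine hle_congr Q ?_ ?_ <;> simp only [Fin.val_mk] <;> omega

theorem ppsE3 {k l : ℕ} (P : CanonPP k) (Q : CanonPP l) {c : ℕ} (hc : c ≤ l) :
    (⟨k + (usetF l c)ᶜ.card, P.comp (Q.restrict (usetF l c)ᶜ)⟩ : PPS)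
      = ⟨(usetF (k + l) (k + c))ᶜ.card, (P.comp Q).restrict (usetF (k + l) (k + c))ᶜ⟩ := by
  have hck : (usetF l c)ᶜ.card = c := card_usetF_compl hc
  have h : k + (usetF l c)ᶜ.card = (usetF (k + l) (k + c))ᶜ.card := by
    rw [card_usetF_compl (show k + c ≤ k + l by omega)]; omega
  refine ppsEq h _ _ (fun x y => ?_)
  have hx := x.isLt
  have hy := y.isLt
  simp only [restrict_hle]
  set a := ((((usetF (k + l) (k + c))ᶜ).orderIsoOfFin rfl) (Fin.cast h x)).1 with hadef
  set b := ((((usetF (k + l) (k + c))ᶜ).orderIsoOfFin rfl) (Fin.cast h y)).1 with hbdef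
  have hav : a.val = x.val := by rw [hadef, orderIso_usetF_compl]; simp
  have hbv : b.val = y.val := by rw [hbdef, orderIso_usetF_compl]; simp
  rcases Nat.lt_or_ge x.val k with hx1 | hx1 <;> rcases Nat.lt_or_ge y.val k with hy1 | hy1
  · rw [comp_hle_ll _ _ hx1 hy1,
      comp_hle_ll P Q (show a.val < k by omega) (show b.val < k by omega)]
    refine hle_congr P ?_ ?_ <;> simp only [Fin.val_mk] <;> omega
  · exact iff_of_false (comp_hle_lr _ _ hx1 hy1)
      (comp_hle_lr P Q (show a.val < k by omega) (show k ≤ b.val by omega))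
  · exact iff_of_false (comp_hle_rl _ _ hx1 hy1)
      (comp_hle_rl P Q (show k ≤ a.val by omega) (show b.val < k by omega))
  · rw [comp_hle_rr _ _ hx1 hy1, restrict_hle,
      comp_hle_rr P Q (show k ≤ a.val by omega) (show k ≤ b.val by omega)]
    refine hle_congr Q ?_ ?_ <;>
      simp only [orderIso_usetF_compl, Fin.val_mk] <;> omega

theorem ppsE4 {k l : ℕ} (P : CanonPP k) (Q : CanonPP l) {c : ℕ} (hc : c ≤ l) :
    (⟨0 + (usetF l c).card, CanonPP.one.comp (Q.restrict (usetF l c))⟩ : PPS)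
      = ⟨(usetF (k + l) (k + c)).card, (P.comp Q).restrict (usetF (k + l) (k + c))⟩ := by
  have hck : (usetF l c).card = l - c := card_usetF
  have h : 0 + (usetF l c).card = (usetF (k + l) (k + c)).card := by
    rw [card_usetF, card_usetF]; omega
  refine ppsEq h _ _ (fun x y => ?_)
  have hx := x.isLt
  have hy := y.isLt
  simp only [restrict_hle]
  set a := (((usetF (k + l) (k + c)).orderIsoOfFin rfl) (Fin.cast h x)).1 with hadef
  set b := (((usetF (k + l) (k + c)).orderIsoOfFin rfl) (Fin.cast h y)).1 with hbdef
  have hav : a.val = (k + c) + x.val := by rw [hadef, orderIso_usetF]; simp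
  have hbv : b.val = (k + c) + y.val := by rw [hbdef, orderIso_usetF]; simp
  rw [comp_hle_rr CanonPP.one _ (Nat.zero_le x.val) (Nat.zero_le y.val), restrict_hle,
    comp_hle_rr P Q (show k ≤ a.val by omega) (show k ≤ b.val by omega)]
  refine hle_congr Q ?_ ?_ <;>
    simp only [orderIso_usetF, Fin.val_mk] <;> omega

theorem ppsE5 {k l : ℕ} (P : CanonPP k) (Q : CanonPP l) :
    (⟨k, P⟩ : PPS) = ⟨(usetF (k + l) k)ᶜ.card, (P.comp Q).restrict (usetF (k + l) k)ᶜ⟩ := by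
  have h : k = (usetF (k + l) k)ᶜ.card := (card_usetF_compl (by omega)).symm
  refine ppsEq h _ _ (fun x y => ?_)
  simp only [restrict_hle]
  set a := ((((usetF (k + l) k)ᶜ).orderIsoOfFin rfl) (Fin.cast h x)).1 with hadef
  set b := ((((usetF (k + l) k)ᶜ).orderIsoOfFin rfl) (Fin.cast h y)).1 with hbdef
  have hav : a.val = x.val := by rw [hadef, orderIso_usetF_compl]; simp
  have hbv : b.val = y.val := by rw [hbdef, orderIso_usetF_compl]; simp
  have hxk := x.isLt
  have hyk := y.isLt
  rw [comp_hle_ll P Q (show a.val < k by omega) (show b.val < k by omega)]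
  refine hle_congr P ?_ ?_ <;> simp only [Fin.val_mk] <;> omega

theorem ppsE6 {k l : ℕ} (P : CanonPP k) (Q : CanonPP l) :
    (⟨l, Q⟩ : PPS) = ⟨(usetF (k + l) k).card, (P.comp Q).restrict (usetF (k + l) k)⟩ := by
  have h : l = (usetF (k + l) k).card := by rw [card_usetF]; omega
  refine ppsEq h _ _ (fun x y => ?_)
  simp only [restrict_hle]
  set a := (((usetF (k + l) k).orderIsoOfFin rfl) (Fin.cast h x)).1 with hadef
  set b := (((usetF (k + l) k).orderIsoOfFin rfl) (Fin.cast h y)).1 with hbdef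
  have hav : a.val = k + x.val := by rw [hadef, orderIso_usetF]; simp
  have hbv : b.val = k + y.val := by rw [hbdef, orderIso_usetF]; simp
  rw [comp_hle_rr P Q (show k ≤ a.val by omega) (show k ≤ b.val by omega)]
  refine hle_congr Q ?_ ?_ <;> simp only [Fin.val_mk] <;> omega

end Aux6
section Aux7

theorem lift_single {K : Type} [Field K] {M : Type*} [AddCommMonoid M] [Module K M]
    (f : PPS → M) (S : PPS) :
    (Finsupp.lift M K PPS f) (Finsupp.single S (1 : K)) = f S := by
  rw [Finsupp.lift_apply, Finsupp.sum_single_index (by simp), one_smul]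

theorem mulPP_single' (K : Type) [Field K] {a b : ℕ} (A : CanonPP a) (B : CanonPP b) :
    mulPP K (Finsupp.single (⟨a, A⟩ : PPS) (1 : K)) (Finsupp.single (⟨b, B⟩ : PPS) (1 : K))
      = Finsupp.single (⟨a + b, A.comp B⟩ : PPS) (1 : K) := by
  rw [mulPP, lift_single, lift_single]
  rfl

theorem keyalg {M : Type*} [AddCommGroup M] (k l : ℕ) (F G1 G2 : ℕ → M) (S : M)
    (hG1 : ∀ c ∈ Finset.range (l + 1), G1 c = F (k + c))
    (hG2 : ∀ c ∈ Finset.range (k + 1), G2 c = F c)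
    (hS : S = F k) :
    ∑ c ∈ Finset.range (k + l + 1), F c
      = (∑ c ∈ Finset.range (l + 1), G1 c) + (∑ c ∈ Finset.range (k + 1), G2 c) - S := by
  rw [Finset.sum_congr rfl hG1, Finset.sum_congr rfl hG2, hS]
  rw [show k + l + 1 = (k + 1) + l by omega, Finset.sum_range_add]
  rw [Finset.sum_range_succ' (fun c => F (k + c)) l]
  simp only [Nat.add_zero]
  rw [Finset.sum_congr rfl
    (fun i (_ : i ∈ Finset.range l) => (by rw [show k + (i + 1) = (k + 1) + i by omega] :
      F (k + (i + 1)) = F ((k + 1) + i)))]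
  abel

end Aux7

/-- For all plane posets `P, Q`, the coproduct `Δ_q` and the composition
product `m` satisfy the infinitesimal compatibility
`Δ_q(PQ) = (P ⊗ 1)Δ_q(Q) + Δ_q(P)(1 ⊗ Q) − P ⊗ Q`,
so that `(h_PP, m, Δ_q)` is an infinitesimal Hopf algebra. -/
theorem statement3 (K : Type) [Field K] (q : K) {k l : ℕ} (P : CanonPP k) (Q : CanonPP l) :
    Delta K q (Finsupp.single (⟨k + l, P.comp Q⟩ : PPS) 1)
      = mulT K
          (Finsupp.single (⟨k, P⟩ : PPS) 1 ⊗ₜ[K] Finsupp.single (⟨0, CanonPP.one⟩ : PPS) 1)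
          (Delta K q (Finsupp.single (⟨l, Q⟩ : PPS) 1))
        + mulT K (Delta K q (Finsupp.single (⟨k, P⟩ : PPS) 1))
            (Finsupp.single (⟨0, CanonPP.one⟩ : PPS) 1 ⊗ₜ[K] Finsupp.single (⟨l, Q⟩ : PPS) 1)
        - Finsupp.single (⟨k, P⟩ : PPS) 1 ⊗ₜ[K] Finsupp.single (⟨l, Q⟩ : PPS) 1 := by
  have h1 : Delta K q (Finsupp.single (⟨k + l, P.comp Q⟩ : PPS) 1) = deltaOn K q (P.comp Q) :=
    lift_single _ _
  have h2 : Delta K q (Finsupp.single (⟨l, Q⟩ : PPS) 1) = deltaOn K q Q := lift_single _ _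
  have h3 : Delta K q (Finsupp.single (⟨k, P⟩ : PPS) 1) = deltaOn K q P := lift_single _ _
  rw [h1, h2, h3, deltaOn_eq K q (P.comp Q), deltaOn_eq K q Q, deltaOn_eq K q P]
  simp only [map_sum, map_smul, LinearMap.sum_apply, LinearMap.smul_apply, mulT,
    TensorProduct.map₂_apply_tmul, TensorProduct.map_tmul, mulPP_single']
  refine keyalg k l
    (fun c => q ^ hNum (P.comp Q) (usetF (k + l) c)ᶜ (usetF (k + l) c) •
        ((Finsupp.single (⟨(usetF (k + l) c)ᶜ.card, (P.comp Q).restrict (usetF (k + l) c)ᶜ⟩ : PPS)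
            (1 : K)) ⊗ₜ[K]
          Finsupp.single (⟨(usetF (k + l) c).card, (P.comp Q).restrict (usetF (k + l) c)⟩ : PPS)
            (1 : K)))
    (fun c => q ^ hNum Q (usetF l c)ᶜ (usetF l c) •
        ((Finsupp.single (⟨k + (usetF l c)ᶜ.card, P.comp (Q.restrict (usetF l c)ᶜ)⟩ : PPS)
            (1 : K)) ⊗ₜ[K]
          Finsupp.single (⟨0 + (usetF l c).card, CanonPP.one.comp (Q.restrict (usetF l c))⟩ : PPS)
            (1 : K)))
    (fun c => q ^ hNum P (usetF k c)ᶜ (usetF k c) •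
        ((Finsupp.single (⟨(usetF k c)ᶜ.card + 0, (P.restrict (usetF k c)ᶜ).comp CanonPP.one⟩ : PPS)
            (1 : K)) ⊗ₜ[K]
          Finsupp.single (⟨(usetF k c).card + l, (P.restrict (usetF k c)).comp Q⟩ : PPS)
            (1 : K)))
    ((Finsupp.single (⟨k, P⟩ : PPS) (1 : K)) ⊗ₜ[K] Finsupp.single (⟨l, Q⟩ : PPS) (1 : K))
    ?_ ?_ ?_
  · intro c hc
    beta_reduce
    rw [Finset.mem_range] at hc
    have hcl : c ≤ l := by omega
    rw [ppsE3 P Q hcl, ppsE4 P Q hcl, ← hNum_comp_upper P Q hcl]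
  · intro c hc
    beta_reduce
    rw [Finset.mem_range] at hc
    have hck : c ≤ k := by omega
    rw [ppsE1 P Q hck, ppsE2 P Q hck, ← hNum_comp_lower P Q hck]
  · beta_reduce
    have e0 : hNum (P.comp Q) (usetF (k + l) k)ᶜ (usetF (k + l) k) = 0 := by
      have h := hNum_comp_upper P Q (Nat.zero_le l)
      rw [Nat.add_zero] at h
      rw [h, hNum_zero_cut]
    rw [e0, pow_zero, one_smul, ← ppsE5 P Q, ← ppsE6 P Q]
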